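/- Let n ≥ 1 and let R ⊆ ℝ^n be a nonempty open connected set. Suppose there exists a continuous function δ : R → ℝ such that (i) 0 < δ(x) ≤ dist(x, ℝ^n ∖ R) for every x ∈ R, and (ii) for every pair of points p, q ∈ R whose closed line segment [p,q] is contained in R, the function t ↦ −log δ((1−t)p + tq) is convex on [0,1]. Then R is convex. (Key convexity claim underlying the proofs of the tube theorems: log-concavity of a positive minorant of the boundary distance along contained segments forces convexity.) -/

import Mathlib

/-- Key convexity claim underlying the proofs of the tube theorems: if a
nonempty open connected set `R ⊆ ℝⁿ` carries a continuous function
`δ : R → ℝ` with `0 < δ(x) ≤ dist(x, ℝⁿ \ R)` (the distance being `+∞` when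
`R = ℝⁿ`, which is captured by `EMetric.infEdist`), such that
`t ↦ -log δ((1-t)p + tq)` is convex on `[0,1]` for every segment
`[p,q] ⊆ R`, then `R` is convex. -/
theorem convex_of_logConcave_minorant (n : ℕ) (hn : 1 ≤ n)
    (R : Set (EuclideanSpace ℝ (Fin n)))
    (hRne : R.Nonempty) (hRopen : IsOpen R) (hRconn : IsConnected R)
    (δ : EuclideanSpace ℝ (Fin n) → ℝ) (hδcont : ContinuousOn δ R)
    (hδpos : ∀ x ∈ R, 0 < δ x)
    (hδle : ∀ x ∈ R, ENNReal.ofReal (δ x) ≤ EMetric.infEdist x Rᶜ)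
    (hconv : ∀ p ∈ R, ∀ q ∈ R, segment ℝ p q ⊆ R →
      ConvexOn ℝ (Set.Icc (0 : ℝ) 1)
        (fun t : ℝ => -Real.log (δ ((1 - t) • p + t • q)))) :
    Convex ℝ R := by
  rw [convex_iff_segment_subset]
  intro p hp q hq
  set T : Set (EuclideanSpace ℝ (Fin n)) := {q' | segment ℝ p q' ⊆ R} with hT
  -- membership in T gives q' ∈ R
  have hTsubR : T ⊆ R := fun q' hq' => hq' (right_mem_segment ℝ p q')
  -- key: δ bound along contained segments
  have hkey : ∀ q' ∈ T, ∀ b ∈ Set.Icc (0 : ℝ) 1,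
      min (δ p) (δ q') ≤ δ ((1 - b) • p + b • q') := by
    intro q' hq' b hb
    obtain ⟨hb0, hb1⟩ := hb
    have hq'R : q' ∈ R := hTsubR hq'
    have hxR : (1 - b) • p + b • q' ∈ R :=
      hq' ⟨1 - b, b, by linarith, hb0, by ring, rfl⟩
    have hf := hconv p hp q' hq'R hq'
    have h0 : (0 : ℝ) ∈ Set.Icc (0 : ℝ) 1 := by norm_num
    have h1 : (1 : ℝ) ∈ Set.Icc (0 : ℝ) 1 := by norm_num
    have hc := hf.2 h0 h1 (by linarith : (0:ℝ) ≤ 1 - b) hb0 (by ring)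
    simp only [smul_eq_mul, mul_zero, mul_one, zero_add] at hc
    -- hc : -log δ((1-b)•p + b•q') ≤ (1-b)*(-log δ p) + b*(-log δ q')
    have hev0 : ((1:ℝ) - 0) • p + (0:ℝ) • q' = p := by
      simp
    have hev1 : ((1:ℝ) - 1) • p + (1:ℝ) • q' = q' := by
      simp
    rw [hev0, hev1] at hc
    set m := min (δ p) (δ q') with hm
    have hmpos : 0 < m := lt_min (hδpos p hp) (hδpos q' hq'R)
    have hlp : Real.log m ≤ Real.log (δ p) := Real.log_le_log hmpos (min_le_left _ _)
    have hlq : Real.log m ≤ Real.log (δ q') := Real.log_le_log hmpos (min_le_right _ _)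
    have hlog : Real.log m ≤ Real.log (δ ((1 - b) • p + b • q')) := by nlinarith
    have := Real.exp_le_exp.2 hlog
    rwa [Real.exp_log hmpos, Real.exp_log (hδpos _ hxR)] at this
  -- T is open
  have hTopen : IsOpen T := by
    rw [Metric.isOpen_iff]
    intro q' hq'
    have hcompact : IsCompact (segment ℝ p q') := by
      rw [segment_eq_image]
      exact isCompact_Icc.image (by continuity)
    obtain ⟨ε, hε, hthick⟩ :=
      hcompact.exists_thickening_subset_open hRopen hq'
    refine ⟨ε, hε, ?_⟩
    intro q'' hq''
    intro x hx
    obtain ⟨a, b, ha, hb, hab, rfl⟩ := hx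
    apply hthick
    rw [Metric.mem_thickening_iff]
    refine ⟨a • p + b • q', ⟨a, b, ha, hb, hab, rfl⟩, ?_⟩
    have : dist (a • p + b • q'') (a • p + b • q') = b * dist q'' q' := by
      rw [dist_eq_norm]
      have : a • p + b • q'' - (a • p + b • q') = b • (q'' - q') := by
        module
      rw [this, norm_smul, Real.norm_eq_abs, abs_of_nonneg hb, dist_eq_norm]
    rw [this]
    calc b * dist q'' q' ≤ 1 * dist q'' q' := by
          apply mul_le_mul_of_nonneg_right _ dist_nonneg; linarith
      _ = dist q'' q' := one_mul _
      _ < ε := hq''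
  -- relative closedness
  have hclos : R ∩ closure T ⊆ T := by
    rintro y ⟨hyR, hycl⟩
    intro x hx
    obtain ⟨a, b, ha, hb, hab, rfl⟩ := hx
    have hδy : 0 < δ y := hδpos y hyR
    set c : ℝ := min (δ p) (δ y / 2) with hc
    have hcpos : 0 < c := lt_min (hδpos p hp) (by linarith)
    have hbound : ENNReal.ofReal c ≤ EMetric.infEdist (a • p + b • y) Rᶜ := by
      apply ENNReal.le_of_forall_pos_le_add
      intro ε hε hfin
      -- find q' ∈ T close to y with δ q' > δ y / 2
      have hcy : ContinuousAt δ y := hδcont.continuousAt (hRopen.mem_nhds hyR)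
      have hU1 : δ ⁻¹' Set.Ioi (δ y / 2) ∈ nhds y :=
        hcy (Ioi_mem_nhds (by linarith))
      have hU2 : Metric.ball y (ε : ℝ) ∈ nhds y :=
        Metric.ball_mem_nhds y (by exact_mod_cast hε)
      obtain ⟨q', hq'U, hq'T⟩ :=
        mem_closure_iff_nhds.1 hycl _ (Filter.inter_mem hU1 hU2)
      obtain ⟨hq'δ, hq'ball⟩ := hq'U
      -- δ bound along segment p q'
      have hb1 : b ∈ Set.Icc (0 : ℝ) 1 := ⟨hb, by linarith⟩
      have h1 : min (δ p) (δ q') ≤ δ ((1 - b) • p + b • q') :=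
        hkey q' hq'T b hb1
      have h2 : c ≤ min (δ p) (δ q') :=
        le_min (min_le_left _ _) (le_trans (min_le_right _ _) (le_of_lt hq'δ))
      have hx'R : (1 - b) • p + b • q' ∈ R :=
        hq'T ⟨1 - b, b, by linarith, hb, by ring, rfl⟩
      have h3 : ENNReal.ofReal c ≤ EMetric.infEdist ((1 - b) • p + b • q') Rᶜ :=
        le_trans (ENNReal.ofReal_le_ofReal (le_trans h2 h1)) (hδle _ hx'R)
      have h4 : EMetric.infEdist ((1 - b) • p + b • q') Rᶜ ≤
          EMetric.infEdist (a • p + b • y) Rᶜ + edist ((1 - b) • p + b • q') (a • p + b • y) :=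
        EMetric.infEdist_le_infEdist_add_edist
      have h5 : edist ((1 - b) • p + b • q') (a • p + b • y) ≤ (ε : ENNReal) := by
        rw [edist_dist]
        have hd : dist ((1 - b) • p + b • q') (a • p + b • y) = b * dist q' y := by
          rw [dist_eq_norm]
          have : (1 - b) • p + b • q' - (a • p + b • y) = b • (q' - y) := by
            have ha' : a = 1 - b := by linarith
            rw [ha']; module
          rw [this, norm_smul, Real.norm_eq_abs, abs_of_nonneg hb, dist_eq_norm]
        have hdle : dist ((1 - b) • p + b • q') (a • p + b • y) ≤ (ε : ℝ) := by
          rw [hd]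
          calc b * dist q' y ≤ 1 * dist q' y := by
                apply mul_le_mul_of_nonneg_right _ dist_nonneg; linarith
            _ = dist q' y := one_mul _
            _ ≤ (ε : ℝ) := le_of_lt (Metric.mem_ball.1 hq'ball)
        calc ENNReal.ofReal (dist ((1 - b) • p + b • q') (a • p + b • y))
            ≤ ENNReal.ofReal (ε : ℝ) := ENNReal.ofReal_le_ofReal hdle
          _ = (ε : ENNReal) := ENNReal.ofReal_coe_nnreal
      calc ENNReal.ofReal c ≤ EMetric.infEdist ((1 - b) • p + b • q') Rᶜ := h3
        _ ≤ EMetric.infEdist (a • p + b • y) Rᶜ + edist ((1 - b) • p + b • q') (a • p + b • y) := h4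
        _ ≤ EMetric.infEdist (a • p + b • y) Rᶜ + (ε : ENNReal) := add_le_add_right h5 _
    -- conclude x ∈ R
    by_contra hxR
    have : EMetric.infEdist (a • p + b • y) Rᶜ = 0 :=
      EMetric.infEdist_zero_of_mem hxR
    rw [this] at hbound
    simp [ENNReal.ofReal_eq_zero] at hbound
    linarith
  -- connectedness argument: R ⊆ T
  have hpT : p ∈ T := by
    intro x hx
    rw [segment_same] at hx
    rw [Set.mem_singleton_iff.1 hx]; exact hp
  have hRT : R ⊆ T := by
    intro y hy
    by_contra hyT
    have hv : IsOpen (closure T)ᶜ := isClosed_closure.isOpen_compl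
    have hsub : R ⊆ T ∪ (closure T)ᶜ := by
      intro z hz
      by_cases h : z ∈ closure T
      · exact Or.inl (hclos ⟨hz, h⟩)
      · exact Or.inr h
    have h1 : (R ∩ T).Nonempty := ⟨p, hp, hpT⟩
    have h2 : (R ∩ (closure T)ᶜ).Nonempty :=
      ⟨y, hy, fun h => hyT (hclos ⟨hy, h⟩)⟩
    obtain ⟨z, hzR, hzT, hzc⟩ :=
      hRconn.isPreconnected T (closure T)ᶜ hTopen hv hsub h1 h2
    exact hzc (subset_closure hzT)
  exact hRT hq
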